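/- For every a ∈ F_q^*, 3 · #{ w ∈ SO^-(2,q) : tr(a·Tr(w)) ≠ 0 } = 2·(q + 1 + K(λ; a²)), and likewise 3 · #{ w ∈ O^-(2,q) : tr(a·Tr(w)) ≠ 0 } = 2·(q + 1 + K(λ; a²)). Equivalently, the Hamming weight of the codeword c(a) = (tr(a·Tr g₁), ..., tr(a·Tr g_N)) in the dual code, for G = SO^-(2,q) or G = O^-(2,q), equals (2/3)·(q + 1 + K(λ; a²)). -/

import Mathlib

open Matrix
open scoped BigOperators Classical

noncomputable section

abbrev Fq (r : ℕ) : Type := GaloisField 3 r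
noncomputable instance (r : ℕ) : Fintype (Fq r) := Fintype.ofFinite _

def lam (r : ℕ) (x : Fq r) : ℂ :=
  Complex.exp (2 * Real.pi * Complex.I * ((Algebra.trace (ZMod 3) (Fq r) x).val : ℂ) / 3)

def Kl (r : ℕ) (a : Fq r) : ℂ :=
  ∑ α ∈ Finset.univ.filter (fun α : Fq r => α ≠ 0), lam r (α + a * α⁻¹)

def SOminus2 (r : ℕ) (ε : Fq r) : Finset (Matrix (Fin 2) (Fin 2) (Fq r)) :=
  Finset.univ.filter (fun w => ∃ a b : Fq r, a ^ 2 - ε * b ^ 2 = 1 ∧ w = !![a, b * ε; b, a])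

def deltaEps (r : ℕ) (ε : Fq r) : Matrix (Fin 2) (Fin 2) (Fq r) := !![1, 0; 0, -ε]

def Ominus2 (r : ℕ) (ε : Fq r) : Finset (Matrix (Fin 2) (Fin 2) (Fq r)) :=
  Finset.univ.filter (fun w => IsUnit w.det ∧ wᵀ * deltaEps r ε * w = deltaEps r ε)

/-! ### Auxiliary lemmas -/

section Aux

open Finset

/-- cube root of unity -/
def zet : ℂ := Complex.exp (2 * Real.pi * Complex.I / 3)

lemma zet_pow_three : zet ^ 3 = 1 := by
  rw [zet, ← Complex.exp_nat_mul, show ((3:ℕ):ℂ) * (2 * Real.pi * Complex.I / 3)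
    = 2 * Real.pi * Complex.I by push_cast; ring]
  exact Complex.exp_two_pi_mul_I

lemma zet_ne_one : zet ≠ 1 := by
  intro h
  rw [zet, Complex.exp_eq_one_iff] at h
  obtain ⟨n, hn⟩ := h
  have hpi : (2 * Real.pi * Complex.I : ℂ) ≠ 0 := by
    simp [Real.pi_ne_zero, Complex.I_ne_zero]
  have h1 : ((1:ℤ) : ℂ) * (2 * Real.pi * Complex.I)
      = ((n*3 : ℤ) : ℂ) * (2 * Real.pi * Complex.I) := by
    push_cast; linear_combination 3 * hn
  have h2 : (1:ℤ) = n * 3 := by exact_mod_cast mul_right_cancel₀ hpi h1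
  omega

lemma one_add_zet : 1 + zet + zet ^ 2 = 0 := by
  have h3 := zet_pow_three
  have h : (zet - 1) * (1 + zet + zet ^ 2) = 0 := by linear_combination h3
  rcases mul_eq_zero.mp h with h | h
  · exact absurd (sub_eq_zero.mp h) zet_ne_one
  · exact h

def om (m : ZMod 3) : ℂ := zet ^ m.val

lemma lam_eq (r : ℕ) (x : Fq r) : lam r x = om (Algebra.trace (ZMod 3) (Fq r) x) := by
  rw [lam, om, zet, ← Complex.exp_nat_mul]
  congr 1; ring

lemma zet_pow_mod (k : ℕ) : zet ^ (k % 3) = zet ^ k := by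
  conv_rhs => rw [← Nat.div_add_mod k 3, pow_add, pow_mul, zet_pow_three, one_pow, one_mul]

lemma om_add (m n : ZMod 3) : om (m + n) = om m * om n := by
  rw [om, om, om, ZMod.val_add, zet_pow_mod, pow_add]

lemma om_pair (m : ZMod 3) : om m + om (-m) = if m = 0 then 2 else -1 := by
  have h := one_add_zet
  have hm := (by decide : ∀ x : ZMod 3, x = 0 ∨ x = 1 ∨ x = 2) m
  have v1 : (1 : ZMod 3).val = 1 := rfl
  have v2 : (2 : ZMod 3).val = 2 := rfl
  have vn1 : (-1 : ZMod 3).val = 2 := rfl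
  have vn2 : (-2 : ZMod 3).val = 1 := rfl
  rcases hm with rfl | rfl | rfl
  · norm_num [om]
  · rw [om, om, v1, vn1]; rw [if_neg (by decide)]; linear_combination h
  · rw [om, om, v2, vn2]; rw [if_neg (by decide)]; linear_combination h

lemma om_ne_one {m : ZMod 3} (hm : m ≠ 0) : om m ≠ 1 := by
  have h := one_add_zet
  have hm' := (by decide : ∀ x : ZMod 3, x ≠ 0 → x = 1 ∨ x = 2) m hm
  have v1 : (1 : ZMod 3).val = 1 := rfl
  have v2 : (2 : ZMod 3).val = 2 := rfl
  rcases hm' with rfl | rfl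
  · rw [om, v1, pow_one]; exact zet_ne_one
  · rw [om, v2]
    intro hz
    have hz2 : zet = -2 := by linear_combination h - hz
    have h3 := zet_pow_three
    rw [hz2] at h3
    norm_num at h3

lemma lam_add (r : ℕ) (x y : Fq r) : lam r (x + y) = lam r x * lam r y := by
  rw [lam_eq, lam_eq, lam_eq, map_add, om_add]

lemma sum_lam (r : ℕ) : ∑ x : Fq r, lam r x = 0 := by
  obtain ⟨x0, hx0⟩ : ∃ x : Fq r, Algebra.trace (ZMod 3) (Fq r) x ≠ 0 := by
    obtain ⟨x, hx⟩ := Algebra.trace_surjective (ZMod 3) (Fq r) 1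
    exact ⟨x, by rw [hx]; exact one_ne_zero⟩
  have hne : lam r x0 ≠ 1 := by rw [lam_eq]; exact om_ne_one hx0
  have h1 : ∑ x : Fq r, lam r (x + x0) = ∑ x : Fq r, lam r x :=
    Fintype.sum_bijective (· + x0) (AddGroup.addRight_bijective x0) _ _ (fun x => rfl)
  have h2 : lam r x0 * ∑ x : Fq r, lam r x = ∑ x : Fq r, lam r x := by
    conv_rhs => rw [← h1]
    rw [Finset.mul_sum]
    exact Finset.sum_congr rfl fun x _ => by rw [lam_add, mul_comm]
  have h3 : (lam r x0 - 1) * ∑ x : Fq r, lam r x = 0 := by linear_combination h2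
  rcases mul_eq_zero.mp h3 with h | h
  · exact absurd (sub_eq_zero.mp h) hne
  · exact h

lemma sum_lam_mul (r : ℕ) (b : Fq r) (hb : b ≠ 0) :
    ∑ t : Fq r, lam r (b * t) = 0 := by
  rw [Fintype.sum_bijective (b * ·) (mulLeft_bijective₀ b hb) _ _ (fun x => rfl)]
  exact sum_lam r

lemma two_ne_zero_Fq (r : ℕ) : (2 : Fq r) ≠ 0 := by
  have : CharP (Fq r) 3 := inferInstance
  intro h
  have := CharP.cast_eq_zero_iff (Fq r) 3 2 |>.mp (by exact_mod_cast h)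
  omega

lemma three_eq_zero_Fq (r : ℕ) : (3 : Fq r) = 0 := by
  have : CharP (Fq r) 3 := inferInstance
  exact_mod_cast CharP.cast_eq_zero (Fq r) 3

lemma card_sqrt (r : ℕ) (c : Fq r) :
    (Finset.univ.filter fun y : Fq r => y ^ 2 = c).card
      = if c = 0 then 1 else if IsSquare c then 2 else 0 := by
  rcases eq_or_ne c 0 with rfl | hc
  · rw [if_pos rfl]
    have : (Finset.univ.filter fun y : Fq r => y ^ 2 = 0) = {0} := by
      ext y; simp [pow_eq_zero_iff]
    rw [this, Finset.card_singleton]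
  · rw [if_neg hc]
    by_cases hsq : IsSquare c
    · rw [if_pos hsq]
      obtain ⟨s, rfl⟩ := hsq
      have hs : s ≠ 0 := fun h => hc (by rw [h, mul_zero])
      have : (Finset.univ.filter fun y : Fq r => y ^ 2 = s * s) = {s, -s} := by
        ext y
        simp only [Finset.mem_filter, Finset.mem_univ, true_and, Finset.mem_insert,
          Finset.mem_singleton]
        constructor
        · intro h
          have : (y - s) * (y + s) = 0 := by linear_combination h
          rcases mul_eq_zero.mp this with h' | h'
          · exact Or.inl (by linear_combination h')
          · exact Or.inr (by linear_combination h')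
        · rintro (rfl | rfl) <;> ring
      rw [this, Finset.card_insert_of_notMem (by
        simp only [Finset.mem_singleton]
        intro h
        apply hs
        have h2 : (2 : Fq r) * s = 0 := by linear_combination h
        rcases mul_eq_zero.mp h2 with h' | h'
        · exact absurd h' (two_ne_zero_Fq r)
        · exact h'), Finset.card_singleton]
    · rw [if_neg hsq]
      rw [Finset.card_eq_zero, Finset.filter_eq_empty_iff]
      intro y _
      exact fun h => hsq ⟨y, by rw [← h]; ring⟩

lemma isSquare_flip (r : ℕ) {ε d : Fq r} (hε : ¬ IsSquare ε) (hd : d ≠ 0) :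
    IsSquare (ε⁻¹ * d) ↔ ¬ IsSquare d := by
  have hε0 : ε ≠ 0 := fun h => hε (h ▸ ⟨0, by ring⟩)
  have hεinv : ε⁻¹ ≠ 0 := inv_ne_zero hε0
  have hεd : ε⁻¹ * d ≠ 0 := mul_ne_zero hεinv hd
  have hχε : quadraticChar (Fq r) ε = -1 := quadraticChar_neg_one_iff_not_isSquare.mpr hε
  have hχinv : quadraticChar (Fq r) ε⁻¹ = -1 := by
    have h1 : quadraticChar (Fq r) ε * quadraticChar (Fq r) ε⁻¹ = 1 := by
      rw [← _root_.map_mul, mul_inv_cancel₀ hε0, _root_.map_one]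
    rw [hχε] at h1; omega
  have hmul : quadraticChar (Fq r) (ε⁻¹ * d) = - quadraticChar (Fq r) d := by
    rw [_root_.map_mul, hχinv]; ring
  constructor
  · intro h hds
    have h1 := (quadraticChar_one_iff_isSquare hεd).mpr h
    have h2 := (quadraticChar_one_iff_isSquare hd).mpr hds
    rw [hmul, h2] at h1; omega
  · intro hds
    have h2 : quadraticChar (Fq r) d = -1 := quadraticChar_neg_one_iff_not_isSquare.mpr hds
    exact (quadraticChar_one_iff_isSquare hεd).mp (by rw [hmul, h2]; ring)

lemma card_fiber_SO (r : ℕ) (ε : Fq r) (t : Fq r) :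
    ((SOminus2 r ε).filter fun w => w.trace = t).card
      = (Finset.univ.filter fun y : Fq r => ε * y ^ 2 = t ^ 2 - 1).card := by
  have h3 := three_eq_zero_Fq r
  apply Finset.card_nbij' (fun w => w 1 0) (fun y => !![-t, y * ε; y, -t])
  · intro w hw
    rw [Finset.mem_coe, Finset.mem_filter] at hw
    obtain ⟨hw1, ht⟩ := hw
    rw [SOminus2, Finset.mem_filter] at hw1
    obtain ⟨-, x, b, hxb, rfl⟩ := hw1
    rw [Matrix.trace_fin_two_of] at ht
    have hx : x = -t := by linear_combination -ht + x * h3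
    simp only [Finset.mem_coe, Finset.mem_filter, Finset.mem_univ, true_and]
    have : (!![x, b * ε; b, x] : Matrix (Fin 2) (Fin 2) (Fq r)) 1 0 = b := by simp
    rw [this]
    linear_combination -hxb + (x - t) * hx
  · intro y hy
    rw [Finset.mem_coe, Finset.mem_filter] at hy
    refine Finset.mem_filter.mpr ⟨?_, ?_⟩
    · rw [SOminus2, Finset.mem_filter]
      exact ⟨Finset.mem_univ _, -t, y, by linear_combination -hy.2, rfl⟩
    · rw [Matrix.trace_fin_two_of]
      linear_combination -t * h3
  · intro w hw
    rw [Finset.mem_coe, Finset.mem_filter] at hw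
    obtain ⟨hw1, ht⟩ := hw
    rw [SOminus2, Finset.mem_filter] at hw1
    obtain ⟨-, x, b, hxb, rfl⟩ := hw1
    rw [Matrix.trace_fin_two_of] at ht
    have hx : x = -t := by linear_combination -ht + x * h3
    have hb : (!![x, b * ε; b, x] : Matrix (Fin 2) (Fin 2) (Fq r)) 1 0 = b := by simp
    beta_reduce
    rw [hb, hx]
  · intro y hy
    simp

lemma card_fiber_beta (r : ℕ) (t : Fq r) :
    (Finset.univ.filter fun β : Fq r => β ≠ 0 ∧ β + β⁻¹ = t).card
      = (Finset.univ.filter fun u : Fq r => u ^ 2 = t ^ 2 - 1).card := by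
  have h3 := three_eq_zero_Fq r
  apply Finset.card_nbij' (fun β => β + t) (fun u => u - t)
  · intro β hβ
    rw [Finset.mem_coe, Finset.mem_filter] at hβ
    obtain ⟨-, hβ0, hβt⟩ := hβ
    have hb : β ^ 2 + 1 = t * β := by
      have := mul_inv_cancel₀ hβ0
      linear_combination β * hβt - this
    refine Finset.mem_filter.mpr ⟨Finset.mem_univ _, ?_⟩
    linear_combination hb + t * β * h3
  · intro u hu
    rw [Finset.mem_coe, Finset.mem_filter] at hu
    obtain ⟨-, hu2⟩ := hu
    have hβ0 : u - t ≠ 0 := by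
      intro h
      have : u = t := by linear_combination h
      rw [this] at hu2
      have : (1 : Fq r) = 0 := by linear_combination hu2
      exact one_ne_zero this
    have hprod : (u - t) * (t - (u - t)) = 1 := by
      linear_combination -hu2 + (u*t - t^2) * h3
    refine Finset.mem_filter.mpr ⟨Finset.mem_univ _, hβ0, ?_⟩
    rw [inv_eq_of_mul_eq_one_right hprod]
    ring
  · intro β _; ring
  · intro u _; ring

lemma fiber_sum (r : ℕ) {ε : Fq r} (hε : ¬ IsSquare ε) (t : Fq r) :
    ((SOminus2 r ε).filter fun w => w.trace = t).card
      + (Finset.univ.filter fun β : Fq r => β ≠ 0 ∧ β + β⁻¹ = t).card = 2 := by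
  have hε0 : ε ≠ 0 := fun h => hε (h ▸ ⟨0, by ring⟩)
  rw [card_fiber_SO, card_fiber_beta]
  have hset : (Finset.univ.filter fun y : Fq r => ε * y ^ 2 = t ^ 2 - 1)
      = (Finset.univ.filter fun y : Fq r => y ^ 2 = ε⁻¹ * (t ^ 2 - 1)) := by
    apply Finset.filter_congr
    intro y _
    constructor
    · intro h; rw [← h]; field_simp
    · intro h; rw [h]; field_simp
  rw [hset, card_sqrt, card_sqrt]
  rcases eq_or_ne (t ^ 2 - 1) 0 with hd | hd
  · rw [hd, mul_zero]; norm_num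
  · rw [if_neg hd, if_neg (mul_ne_zero (inv_ne_zero hε0) hd)]
    have := isSquare_flip r hε hd
    by_cases hsq : IsSquare (t ^ 2 - 1)
    · rw [if_pos hsq, if_neg (fun h => (this.mp h) hsq)]
    · rw [if_neg hsq, if_pos (this.mpr hsq)]

lemma master (r : ℕ) {ε : Fq r} (hε : ¬ IsSquare ε) (f : Fq r → ℂ) :
    (∑ w ∈ SOminus2 r ε, f w.trace)
      + ∑ β ∈ Finset.univ.filter (fun β : Fq r => β ≠ 0), f (β + β⁻¹)
      = 2 * ∑ t : Fq r, f t := by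
  have h1 : ∑ w ∈ SOminus2 r ε, f w.trace
      = ∑ t : Fq r, (((SOminus2 r ε).filter fun w => w.trace = t).card : ℂ) * f t := by
    rw [← Finset.sum_fiberwise_of_maps_to (g := fun w : Matrix (Fin 2) (Fin 2) (Fq r) => w.trace)
      (fun w _ => Finset.mem_univ w.trace) (fun w => f w.trace)]
    refine Finset.sum_congr rfl fun t _ => ?_
    rw [Finset.sum_congr rfl (fun w hw => by rw [(Finset.mem_filter.mp hw).2]),
      Finset.sum_const, nsmul_eq_mul]
  have h2 : ∑ β ∈ Finset.univ.filter (fun β : Fq r => β ≠ 0), f (β + β⁻¹)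
      = ∑ t : Fq r,
        ((Finset.univ.filter fun β : Fq r => β ≠ 0 ∧ β + β⁻¹ = t).card : ℂ) * f t := by
    rw [← Finset.sum_fiberwise_of_maps_to (g := fun β : Fq r => β + β⁻¹)
      (fun β _ => Finset.mem_univ _) (fun β => f (β + β⁻¹))]
    refine Finset.sum_congr rfl fun t _ => ?_
    rw [Finset.sum_congr rfl (fun β hβ => by rw [(Finset.mem_filter.mp hβ).2]),
      Finset.sum_const, nsmul_eq_mul, Finset.filter_filter]
  rw [h1, h2, ← Finset.sum_add_distrib, Finset.mul_sum]
  refine Finset.sum_congr rfl fun t _ => ?_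
  rw [← add_mul]
  congr 1
  have := fiber_sum r hε t
  exact_mod_cast congrArg (fun n : ℕ => (n : ℂ)) this

lemma Kl_eq (r : ℕ) {a : Fq r} (ha : a ≠ 0) :
    Kl r (a ^ 2) = ∑ β ∈ Finset.univ.filter (fun β : Fq r => β ≠ 0),
      lam r (a * (β + β⁻¹)) := by
  rw [Kl]
  apply Finset.sum_nbij' (fun α => a⁻¹ * α) (fun β => a * β)
  · intro α hα
    rw [Finset.mem_filter] at hα ⊢
    exact ⟨Finset.mem_univ _, mul_ne_zero (inv_ne_zero ha) hα.2⟩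
  · intro β hβ
    rw [Finset.mem_filter] at hβ ⊢
    exact ⟨Finset.mem_univ _, mul_ne_zero ha hβ.2⟩
  · intro α _; field_simp
  · intro β _; field_simp
  · intro α hα
    rw [Finset.mem_filter] at hα
    congr 1
    rw [_root_.mul_inv_rev, inv_inv]
    field_simp
lemma neg_sum_eq (r : ℕ) {a : Fq r} (ha : a ≠ 0) :
    ∑ β ∈ Finset.univ.filter (fun β : Fq r => β ≠ 0), lam r (-a * (β + β⁻¹))
      = ∑ β ∈ Finset.univ.filter (fun β : Fq r => β ≠ 0), lam r (a * (β + β⁻¹)) := by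
  apply Finset.sum_nbij' (fun β => -β) (fun β => -β)
  · intro β hβ
    rw [Finset.mem_filter] at hβ ⊢
    exact ⟨Finset.mem_univ _, neg_ne_zero.mpr hβ.2⟩
  · intro β hβ
    rw [Finset.mem_filter] at hβ ⊢
    exact ⟨Finset.mem_univ _, neg_ne_zero.mpr hβ.2⟩
  · intro β _; ring
  · intro β _; ring
  · intro β _
    congr 1
    rw [inv_neg]
    ring

lemma card_SO (r : ℕ) (hr : 0 < r) {ε : Fq r} (hε : ¬ IsSquare ε) :
    ((SOminus2 r ε).card : ℂ) = 3 ^ r + 1 := by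
  have hq : (Fintype.card (Fq r) : ℂ) = 3 ^ r := by
    have : Fintype.card (Fq r) = 3 ^ r := by
      rw [← Nat.card_eq_fintype_card]; exact GaloisField.card 3 r hr.ne'
    rw [this]; push_cast; ring
  have hwest : ((Finset.univ.filter fun β : Fq r => β ≠ 0).card : ℂ)
      = 3 ^ r - 1 := by
    have h1 : (Finset.univ.filter fun β : Fq r => β ≠ 0)
        = Finset.univ.erase 0 := by
      ext β; simp [Finset.mem_erase, and_comm]
    rw [h1, Finset.card_erase_of_mem (Finset.mem_univ 0), Finset.card_univ]
    have hq' : Fintype.card (Fq r) = 3 ^ r := by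
      rw [← Nat.card_eq_fintype_card]; exact GaloisField.card 3 r hr.ne'
    rw [hq']
    have h2 : (1:ℕ) ≤ 3 ^ r := Nat.one_le_pow r 3 (by norm_num)
    push_cast [Nat.cast_sub h2]
    ring
  have hm := master r hε (fun _ => (1:ℂ))
  simp only [Finset.sum_const, nsmul_eq_mul, mul_one, Finset.card_univ] at hm
  rw [hwest, hq] at hm
  linear_combination hm

lemma main_SO (r : ℕ) (hr : 0 < r) {ε : Fq r} (hε : ¬ IsSquare ε)
    {a : Fq r} (ha : a ≠ 0) :
    (3 : ℂ) * (((SOminus2 r ε).filter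
        (fun w => Algebra.trace (ZMod 3) (Fq r) (a * w.trace) ≠ 0)).card : ℂ) =
      2 * ((3 : ℂ) ^ r + 1 + Kl r (a ^ 2)) := by
  have hTa : ∑ w ∈ SOminus2 r ε, lam r (a * w.trace) = - Kl r (a ^ 2) := by
    have hm := master r hε (fun t => lam r (a * t))
    rw [sum_lam_mul r a ha] at hm
    rw [Kl_eq r ha]
    linear_combination hm
  have hTna : ∑ w ∈ SOminus2 r ε, lam r (-a * w.trace) = - Kl r (a ^ 2) := by
    have hm := master r hε (fun t => lam r (-a * t))
    rw [sum_lam_mul r (-a) (neg_ne_zero.mpr ha), neg_sum_eq r ha] at hm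
    rw [Kl_eq r ha]
    linear_combination hm
  have hcard := card_SO r hr hε
  have hpoint : ∀ w ∈ SOminus2 r ε,
      (2:ℂ) - lam r (a * w.trace) - lam r (-a * w.trace)
        = if Algebra.trace (ZMod 3) (Fq r) (a * w.trace) ≠ 0 then (3:ℂ) else 0 := by
    intro w _
    have hneg : (-a * w.trace) = -(a * w.trace) := by ring
    rw [hneg, lam_eq, lam_eq, map_neg]
    have hp := om_pair (Algebra.trace (ZMod 3) (Fq r) (a * w.trace))
    by_cases h : Algebra.trace (ZMod 3) (Fq r) (a * w.trace) = 0
    · rw [if_pos h] at hp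
      rw [if_neg (by simpa using h)]
      linear_combination -hp
    · rw [if_neg h] at hp
      rw [if_pos h]
      linear_combination -hp
  have hsum : ∑ w ∈ SOminus2 r ε,
      ((2:ℂ) - lam r (a * w.trace) - lam r (-a * w.trace))
      = 3 * (((SOminus2 r ε).filter
          (fun w => Algebra.trace (ZMod 3) (Fq r) (a * w.trace) ≠ 0)).card : ℂ) := by
    rw [Finset.sum_congr rfl hpoint, ← Finset.sum_filter, Finset.sum_const, nsmul_eq_mul]
    ring
  have hexp : ∑ w ∈ SOminus2 r ε,
      ((2:ℂ) - lam r (a * w.trace) - lam r (-a * w.trace))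
      = 2 * ((SOminus2 r ε).card : ℂ)
        - (∑ w ∈ SOminus2 r ε, lam r (a * w.trace))
        - (∑ w ∈ SOminus2 r ε, lam r (-a * w.trace)) := by
    rw [Finset.sum_sub_distrib, Finset.sum_sub_distrib, Finset.sum_const, nsmul_eq_mul]
    ring
  rw [← hsum, hexp, hTa, hTna, hcard]
  ring

lemma SO_subset_O (r : ℕ) (ε : Fq r) : SOminus2 r ε ⊆ Ominus2 r ε := by
  intro w hw
  rw [SOminus2, Finset.mem_filter] at hw
  obtain ⟨-, x, b, h, rfl⟩ := hw
  rw [Ominus2, Finset.mem_filter]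
  refine ⟨Finset.mem_univ _, ?_, ?_⟩
  · have hdet : (!![x, b * ε; b, x] : Matrix (Fin 2) (Fin 2) (Fq r)).det = 1 := by
      rw [Matrix.det_fin_two_of]; linear_combination h
    rw [hdet]; exact isUnit_one
  · have htr : (!![x, b * ε; b, x] : Matrix (Fin 2) (Fin 2) (Fq r))ᵀ = !![x, b; b * ε, x] := by
      ext i j; fin_cases i <;> fin_cases j <;> simp
    rw [htr]
    ext i j
    fin_cases i <;> fin_cases j <;>
      simp [deltaEps, Matrix.mul_apply, Fin.sum_univ_two]
    · linear_combination h
    · ring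
    · ring
    · linear_combination (-ε) * h

lemma O_mem_SO (r : ℕ) {ε : Fq r} (hε0 : ε ≠ 0) {w : Matrix (Fin 2) (Fin 2) (Fq r)}
    (hw : w ∈ Ominus2 r ε) (htr : w.trace ≠ 0) : w ∈ SOminus2 r ε := by
  rw [Ominus2, Finset.mem_filter] at hw
  obtain ⟨-, -, heq⟩ := hw
  have e := Matrix.ext_iff.mpr heq
  have e00 := e 0 0
  have e01 := e 0 1
  have e11 := e 1 1
  simp [Matrix.mul_apply, Fin.sum_univ_two, deltaEps, Matrix.transpose_apply] at e00 e01 e11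
  set p := w 0 0 with hp
  set q := w 0 1 with hq0
  set s := w 1 0 with hs
  set u := w 1 1 with hu0
  have h1 : p ^ 2 - ε * s ^ 2 = 1 := by linear_combination e00
  have h2 : p * q = ε * s * u := by linear_combination e01
  have h3 : q ^ 2 - ε * u ^ 2 = -ε := by linear_combination e11
  have hpd : p * (p * u - q * s) = u := by linear_combination u * h1 - s * h2
  have hqd : q * (p * u - q * s) = ε * s := by linear_combination u * h2 - s * h3
  have hD2 : ε * (p * u - q * s) ^ 2 = ε * 1 := by
    linear_combination (p * q - ε * s * u) * h2 - (q ^ 2 - ε * u ^ 2) * h1 - h3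
  have hD2' : (p * u - q * s) ^ 2 = 1 := mul_left_cancel₀ hε0 hD2
  have hfac : ((p * u - q * s) - 1) * ((p * u - q * s) + 1) = 0 := by linear_combination hD2'
  rcases mul_eq_zero.mp hfac with hd | hd
  · have hd1 : p * u - q * s = 1 := by linear_combination hd
    have hu : u = p := by linear_combination p * hd1 - hpd
    have hq : q = s * ε := by linear_combination hqd - q * hd1
    rw [SOminus2, Finset.mem_filter]
    refine ⟨Finset.mem_univ _, p, s, h1, ?_⟩
    conv_lhs => rw [Matrix.eta_fin_two w]
    rw [← hp, ← hq0, ← hs, ← hu0, hq, hu]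
  · exfalso
    apply htr
    have hd1 : p * u - q * s = -1 := by linear_combination hd
    have hup : u + p = 0 := by linear_combination -hpd + p * hd1
    rw [Matrix.trace_fin_two]
    linear_combination hup

end Aux

theorem stmt18 (r : ℕ) (hr : 0 < r) (ε : Fq r) (hε : ¬ IsSquare ε)
    (a : Fq r) (ha : a ≠ 0) :
    (3 : ℂ) * (((SOminus2 r ε).filter
        (fun w => Algebra.trace (ZMod 3) (Fq r) (a * w.trace) ≠ 0)).card : ℂ) =
      2 * ((3 : ℂ) ^ r + 1 + Kl r (a ^ 2))
    ∧ (3 : ℂ) * (((Ominus2 r ε).filter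
        (fun w => Algebra.trace (ZMod 3) (Fq r) (a * w.trace) ≠ 0)).card : ℂ) =
      2 * ((3 : ℂ) ^ r + 1 + Kl r (a ^ 2)) := by
  have hSO := main_SO r hr hε ha
  refine ⟨hSO, ?_⟩
  have hε0 : ε ≠ 0 := fun h => hε (h ▸ ⟨0, by ring⟩)
  have hfe : (Ominus2 r ε).filter
      (fun w => Algebra.trace (ZMod 3) (Fq r) (a * w.trace) ≠ 0)
      = (SOminus2 r ε).filter
      (fun w => Algebra.trace (ZMod 3) (Fq r) (a * w.trace) ≠ 0) := by
    ext w
    simp only [Finset.mem_filter]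
    constructor
    · rintro ⟨hw, hP⟩
      have htr : w.trace ≠ 0 := by
        intro h
        exact hP (by rw [h, mul_zero, map_zero])
      exact ⟨O_mem_SO r hε0 hw htr, hP⟩
    · rintro ⟨hw, hP⟩
      exact ⟨SO_subset_O r ε hw, hP⟩
  rw [hfe]
  exact hSO
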